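/- arXiv:2305.15490 — 3 statements merged into one kernel-verified Lean document; each statement's English description precedes it below -/
import Mathlib

section
/- Let g : ℝ^r → ℝ^n be a C² immersion and define Γ : ℝ^{2r} → ℝ^{2n} by Γ(q̃, p̃) = (g(q̃), p_ref + ((Dg|_{q̃})⁺)ᵀ p̃) where (Dg|_{q̃})⁺ = ((Dg|_{q̃})ᵀ Dg|_{q̃})⁻¹ (Dg|_{q̃})ᵀ is the Moore–Penrose inverse and p_ref ∈ ℝ^n is a constant. Then the Jacobian of Γ at every point (q̃, p̃) is a symplectic matrix: (DΓ)ᵀ J₂ₙ DΓ = J₂ᵣ. -/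
open Matrix

section Aux
variable {E : Type*} [NormedAddCommGroup E] [NormedSpace ℝ E]
variable {k : Type*} [Fintype k] [DecidableEq k]

lemma differentiableAt_det {M : E → Matrix k k ℝ} {x : E}
    (hM : ∀ i j, DifferentiableAt ℝ (fun x => M x i j) x) :
    DifferentiableAt ℝ (fun x => (M x).det) x := by
  simp only [Matrix.det_apply']
  apply DifferentiableAt.fun_sum
  intro σ _
  apply DifferentiableAt.const_mul
  exact (HasFDerivAt.finset_prod (u := Finset.univ) (g := fun i y => M y (σ i) i)
    (g' := fun i => fderiv ℝ (fun y => M y (σ i) i) x)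
    (fun i _ => (hM (σ i) i).hasFDerivAt)).differentiableAt

lemma differentiableAt_adjugate {M : E → Matrix k k ℝ} {x : E}
    (hM : ∀ i j, DifferentiableAt ℝ (fun x => M x i j) x) (i j : k) :
    DifferentiableAt ℝ (fun x => (M x).adjugate i j) x := by
  simp only [Matrix.adjugate_apply]
  apply differentiableAt_det
  intro a b
  simp only [Matrix.updateRow_apply]
  split_ifs
  · exact differentiableAt_const _
  · exact hM a b

lemma differentiableAt_inv_entry {M : E → Matrix k k ℝ} {x : E}
    (hM : ∀ i j, DifferentiableAt ℝ (fun x => M x i j) x)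
    (hdet : (M x).det ≠ 0) (i j : k) :
    DifferentiableAt ℝ (fun x => (M x)⁻¹ i j) x := by
  have : (fun x => (M x)⁻¹ i j) = fun x => ((M x).det)⁻¹ * (M x).adjugate i j := by
    funext y
    rw [Matrix.inv_def, Ring.inverse_eq_inv', Matrix.smul_apply, smul_eq_mul]
  rw [this]
  exact ((differentiableAt_det hM).inv hdet).mul (differentiableAt_adjugate hM i j)

lemma isUnit_of_rank_eq_card {m : ℕ} {S : Matrix (Fin m) (Fin m) ℝ} (h : S.rank = m) :
    IsUnit S := by
  rw [← Matrix.mulVec_surjective_iff_isUnit]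
  have htop : LinearMap.range S.mulVecLin = ⊤ := by
    apply Submodule.eq_top_of_finrank_eq
    rw [← Matrix.rank, h]
    simp [Module.finrank_pi]
  intro v
  have := LinearMap.range_eq_top.mp htop v
  simpa using this

end Aux

/-- The canonical symplectic matrix `J₂ₙ = [[0, Iₙ], [-Iₙ, 0]]`. -/
noncomputable def symplJ (n : ℕ) : Matrix (Fin n ⊕ Fin n) (Fin n ⊕ Fin n) ℝ :=
  Matrix.fromBlocks 0 1 (-1) 0

/-- The Jacobian matrix of a map between finite pi spaces over ℝ. -/
noncomputable def jacobian {κ ι : Type*} [Fintype κ] [DecidableEq κ] [Fintype ι]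
    (f : (κ → ℝ) → (ι → ℝ)) (x : κ → ℝ) : Matrix ι κ ℝ :=
  fun i j => fderiv ℝ f x (Pi.single j 1) i

/-- Moore–Penrose inverse of a full-column-rank matrix. -/
noncomputable def mpinv {m k : Type*} [Fintype m] [Fintype k] [DecidableEq k]
    (A : Matrix m k ℝ) : Matrix k m ℝ :=
  (Aᵀ * A)⁻¹ * Aᵀ

/-- The manifold cotangent lift embedding `Γ(q̃, p̃) = (g(q̃), p_ref + ((Dg|_{q̃})⁺)ᵀ p̃)`,
with the state written as a function on `Fin r ⊕ Fin r`. -/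
noncomputable def MCL {n r : ℕ} (g : (Fin r → ℝ) → (Fin n → ℝ)) (pref : Fin n → ℝ) :
    (Fin r ⊕ Fin r → ℝ) → (Fin n ⊕ Fin n → ℝ) :=
  fun w => Sum.elim (g (w ∘ Sum.inl))
    (pref + (mpinv (jacobian g (w ∘ Sum.inl)))ᵀ *ᵥ (w ∘ Sum.inr))

set_option maxHeartbeats 1000000 in
theorem MCL_is_symplectic_map (n r : ℕ)
    (g : (Fin r → ℝ) → (Fin n → ℝ)) (hg : ContDiff ℝ 2 g)
    (himm : ∀ q : Fin r → ℝ, (jacobian g q).rank = r)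
    (pref : Fin n → ℝ) (z : Fin r ⊕ Fin r → ℝ) :
    (jacobian (MCL g pref) z)ᵀ * symplJ n * jacobian (MCL g pref) z = symplJ r := by
  classical
  have hg1 : Differentiable ℝ g := hg.differentiable (by norm_num)
  set q : Fin r → ℝ := z ∘ Sum.inl with hqdef
  set p : Fin r → ℝ := z ∘ Sum.inr with hpdef
  -- invertibility facts
  have hunit : ∀ y, IsUnit ((jacobian g y)ᵀ * jacobian g y) := fun y =>
    isUnit_of_rank_eq_card (by rw [Matrix.rank_transpose_mul_self]; exact himm y)
  have hunitdet : ∀ y, IsUnit ((jacobian g y)ᵀ * jacobian g y).det := fun y =>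
    (Matrix.isUnit_iff_isUnit_det _).mp (hunit y)
  have hdet : ∀ y, ((jacobian g y)ᵀ * jacobian g y).det ≠ 0 := fun y =>
    (hunitdet y).ne_zero
  have hFdef : ∀ y, (mpinv (jacobian g y))ᵀ
      = jacobian g y * ((jacobian g y)ᵀ * jacobian g y)⁻¹ := by
    intro y
    simp [mpinv, Matrix.transpose_mul, Matrix.transpose_nonsing_inv, Matrix.transpose_transpose]
  have hAF : ∀ y, (jacobian g y)ᵀ * (mpinv (jacobian g y))ᵀ = 1 := by
    intro y
    rw [hFdef, ← Matrix.mul_assoc, Matrix.mul_nonsing_inv _ (hunitdet y)]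
  -- differentiability of the Jacobian entries
  have hΦ : ContDiff ℝ 1 (fderiv ℝ g) := hg.fderiv_right (by norm_num)
  have hΦd : Differentiable ℝ (fderiv ℝ g) := hΦ.differentiable one_ne_zero
  have hAdiff : ∀ (a : Fin n) (j : Fin r),
      Differentiable ℝ (fun y => jacobian g y a j) := by
    intro a j
    exact (((ContinuousLinearMap.proj a).comp
      (ContinuousLinearMap.apply ℝ (Fin n → ℝ) (Pi.single j 1))).differentiable).comp hΦd
  have hSdiff : ∀ (i j : Fin r),
      Differentiable ℝ (fun y => ((jacobian g y)ᵀ * jacobian g y) i j) := by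
    intro i j
    have heq : (fun y => ((jacobian g y)ᵀ * jacobian g y) i j)
        = fun y => ∑ a, jacobian g y a i * jacobian g y a j := by
      funext y; simp [Matrix.mul_apply, Matrix.transpose_apply]
    rw [heq]
    exact Differentiable.fun_sum fun a _ => (hAdiff a i).mul (hAdiff a j)
  have hSinv : ∀ (i j : Fin r),
      Differentiable ℝ (fun y => (((jacobian g y)ᵀ * jacobian g y))⁻¹ i j) := by
    intro i j y₀
    exact differentiableAt_inv_entry (fun i j => (hSdiff i j).differentiableAt) (hdet y₀) i j
  have hFdiff : ∀ (a : Fin n) (k : Fin r),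
      Differentiable ℝ (fun y => (mpinv (jacobian g y))ᵀ a k) := by
    intro a k
    have heq : (fun y => (mpinv (jacobian g y))ᵀ a k)
        = fun y => ∑ c, jacobian g y a c * ((jacobian g y)ᵀ * jacobian g y)⁻¹ c k := by
      funext y; rw [hFdef y]; simp [Matrix.mul_apply]
    rw [heq]
    exact Differentiable.fun_sum fun c _ => (hAdiff a c).mul (hSinv c k)
  -- second derivative symmetry
  have hf'' : HasFDerivAt (fderiv ℝ g) (fderiv ℝ (fderiv ℝ g) q) q := (hΦd q).hasFDerivAt
  have hsymm : ∀ v w, fderiv ℝ (fderiv ℝ g) q v w = fderiv ℝ (fderiv ℝ g) q w v :=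
    second_derivative_symmetric (fun y => (hg1 y).hasFDerivAt) hf''
  have hA' : ∀ (a : Fin n) (l m : Fin r),
      fderiv ℝ (fun y => jacobian g y a l) q (Pi.single m 1)
        = fderiv ℝ (fderiv ℝ g) q (Pi.single m 1) (Pi.single l 1) a := by
    intro a l m
    have h1 : HasFDerivAt (fun y => jacobian g y a l)
        (((ContinuousLinearMap.proj a).comp
          (ContinuousLinearMap.apply ℝ (Fin n → ℝ) (Pi.single l 1))).comp
            (fderiv ℝ (fderiv ℝ g) q)) q := by
      have h0 := (((ContinuousLinearMap.proj (R := ℝ) (φ := fun _ : Fin n => ℝ) a).comp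
        (ContinuousLinearMap.apply ℝ (Fin n → ℝ) (Pi.single l 1))).hasFDerivAt
          (x := fderiv ℝ g q)).comp q hf''
      exact h0
    rw [h1.fderiv]; rfl
  -- abbreviations
  set A0 : Matrix (Fin n) (Fin r) ℝ := jacobian g q with hA0
  set F0 : Matrix (Fin n) (Fin r) ℝ := (mpinv (jacobian g q))ᵀ with hF0
  set C0 : Matrix (Fin n) (Fin r) ℝ := fun a m =>
    ∑ k, p k * fderiv ℝ (fun y => (mpinv (jacobian g y))ᵀ a k) q (Pi.single m 1) with hC0
  -- the linear map extracting the `inl` part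
  set Lin : ((Fin r ⊕ Fin r) → ℝ) →L[ℝ] (Fin r → ℝ) :=
    ContinuousLinearMap.pi (fun j => ContinuousLinearMap.proj (Sum.inl j)) with hLin
  have hLinz : Lin z = q := rfl
  have hLsingle_l : ∀ j : Fin r, Lin (Pi.single (Sum.inl j) 1) = Pi.single j 1 := by
    intro j; funext c
    simp [hLin, ContinuousLinearMap.pi_apply, Pi.single_apply, Sum.inl.injEq]
  have hLsingle_r : ∀ j : Fin r, Lin (Pi.single (Sum.inr j) 1) = 0 := by
    intro j; funext c
    simp [hLin, ContinuousLinearMap.pi_apply, Pi.single_apply]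
  -- componentwise derivative of MCL
  set Li : (Fin n ⊕ Fin n) → (((Fin r ⊕ Fin r) → ℝ) →L[ℝ] ℝ) := fun i =>
    Sum.elim
      (fun a => ((ContinuousLinearMap.proj a).comp (fderiv ℝ g q)).comp Lin)
      (fun a => ∑ k, ((mpinv (jacobian g q))ᵀ a k • ContinuousLinearMap.proj (Sum.inr k)
        + z (Sum.inr k) • ((fderiv ℝ (fun y => (mpinv (jacobian g y))ᵀ a k) q).comp Lin)))
      i with hLi
  have hMCLd : ∀ i, HasFDerivAt (fun w => MCL g pref w i) (Li i) z := by
    intro i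
    cases i with
    | inl a =>
      have hga : HasFDerivAt (fun y => g y a)
          ((ContinuousLinearMap.proj a).comp (fderiv ℝ g q)) (Lin z) := by
        have h0 := ((ContinuousLinearMap.proj (R := ℝ) (φ := fun _ : Fin n => ℝ) a).hasFDerivAt
          (x := g q)).comp q (hg1 q).hasFDerivAt
        exact h0
      have h1 := hga.comp z Lin.hasFDerivAt
      exact h1
    | inr a =>
      have hfun : (fun w => MCL g pref w (Sum.inr a))
          = fun w => pref a + ∑ k, (mpinv (jacobian g (w ∘ Sum.inl)))ᵀ a k * w (Sum.inr k) := by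
        funext w
        simp [MCL, Matrix.mulVec, dotProduct, Function.comp]
      rw [hfun]
      apply HasFDerivAt.const_add
      apply HasFDerivAt.fun_sum
      intro k _
      have hc : HasFDerivAt (fun w => (mpinv (jacobian g (w ∘ Sum.inl)))ᵀ a k)
          ((fderiv ℝ (fun y => (mpinv (jacobian g y))ᵀ a k) q).comp Lin) z :=
        ((hFdiff a k (Lin z)).hasFDerivAt).comp z Lin.hasFDerivAt
      have hd : HasFDerivAt (𝕜 := ℝ) (fun w : (Fin r ⊕ Fin r) → ℝ => w (Sum.inr k))
          (ContinuousLinearMap.proj (Sum.inr k)) z := by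
        exact (ContinuousLinearMap.proj (Sum.inr k) :
          ((Fin r ⊕ Fin r) → ℝ) →L[ℝ] ℝ).hasFDerivAt
      exact hc.mul hd
  have hD : HasFDerivAt (MCL g pref) (ContinuousLinearMap.pi Li) z := hasFDerivAt_pi.2 hMCLd
  have hjac : ∀ i j, jacobian (MCL g pref) z i j = Li i (Pi.single j 1) := by
    intro i j
    show fderiv ℝ (MCL g pref) z (Pi.single j 1) i = _
    rw [hD.fderiv]; rfl
  -- the block structure of the Jacobian of MCL
  have hDblock : jacobian (MCL g pref) z = Matrix.fromBlocks A0 0 C0 F0 := by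
    ext i j
    cases i with
    | inl a =>
      cases j with
      | inl j =>
        rw [hjac]
        simp only [hLi, Sum.elim_inl, ContinuousLinearMap.comp_apply, hLsingle_l,
          Matrix.fromBlocks_apply₁₁]
        rfl
      | inr j =>
        rw [hjac]
        simp only [hLi, Sum.elim_inl, ContinuousLinearMap.comp_apply, hLsingle_r,
          Matrix.fromBlocks_apply₁₂, map_zero, ContinuousLinearMap.zero_apply, Matrix.zero_apply]
    | inr a =>
      cases j with
      | inl j =>
        rw [hjac]
        simp only [hLi, Sum.elim_inr, ContinuousLinearMap.sum_apply,
          ContinuousLinearMap.add_apply, ContinuousLinearMap.smul_apply,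
          ContinuousLinearMap.comp_apply, hLsingle_l, ContinuousLinearMap.proj_apply,
          Matrix.fromBlocks_apply₂₁, smul_eq_mul, hC0]
        simp [Pi.single_apply, hpdef, Function.comp]
        rfl
      | inr j =>
        rw [hjac]
        simp only [hLi, Sum.elim_inr, ContinuousLinearMap.sum_apply,
          ContinuousLinearMap.add_apply, ContinuousLinearMap.smul_apply,
          ContinuousLinearMap.comp_apply, hLsingle_r, ContinuousLinearMap.proj_apply,
          Matrix.fromBlocks_apply₂₂, smul_eq_mul, map_zero]
        simp [Pi.single_apply, hF0]
  -- key algebra facts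
  have hAF0 : A0ᵀ * F0 = 1 := hAF q
  have hFA0 : F0ᵀ * A0 = 1 := by
    have h := congrArg Matrix.transpose hAF0
    simpa [Matrix.transpose_mul] using h
  -- symmetry of A0ᵀ * C0
  have hAC_symm : ∀ l m : Fin r,
      (∑ c, jacobian g q c l
        * (∑ k, p k * fderiv ℝ (fun y => (mpinv (jacobian g y))ᵀ c k) q (Pi.single m 1)))
      = ∑ c, jacobian g q c m
        * (∑ k, p k * fderiv ℝ (fun y => (mpinv (jacobian g y))ᵀ c k) q (Pi.single l 1)) := by
    have key : ∀ l : Fin r,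
        (fun y => ∑ c, jacobian g y c l * (∑ k, (mpinv (jacobian g y))ᵀ c k * p k))
          = fun _ => p l := by
      intro l; funext y
      have h1 : (jacobian g y)ᵀ * (mpinv (jacobian g y))ᵀ = 1 := hAF y
      calc ∑ c, jacobian g y c l * (∑ k, (mpinv (jacobian g y))ᵀ c k * p k)
          = ∑ c, ∑ k, jacobian g y c l * ((mpinv (jacobian g y))ᵀ c k * p k) := by
            simp [Finset.mul_sum]
        _ = ∑ k, (∑ c, jacobian g y c l * (mpinv (jacobian g y))ᵀ c k) * p k := by
            rw [Finset.sum_comm]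
            simp [Finset.sum_mul, mul_assoc]
        _ = ∑ k, ((jacobian g y)ᵀ * (mpinv (jacobian g y))ᵀ) l k * p k := by
            simp [Matrix.mul_apply, Matrix.transpose_apply]
        _ = p l := by simp [h1, Matrix.one_apply]
    have hlhs : ∀ l : Fin r, HasFDerivAt
        (fun y => ∑ c, jacobian g y c l * (∑ k, (mpinv (jacobian g y))ᵀ c k * p k))
        (∑ c, (jacobian g q c l • (∑ k, p k • fderiv ℝ (fun y => (mpinv (jacobian g y))ᵀ c k) q)
          + (∑ k, (mpinv (jacobian g q))ᵀ c k * p k) • fderiv ℝ (fun y => jacobian g y c l) q))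
        q := by
      intro l
      apply HasFDerivAt.fun_sum
      intro c _
      exact HasFDerivAt.mul ((hAdiff c l q).hasFDerivAt)
        (HasFDerivAt.fun_sum fun k _ => ((hFdiff c k q).hasFDerivAt.mul_const (p k)))
    have hzero : ∀ l : Fin r,
        (∑ c, (jacobian g q c l • (∑ k, p k • fderiv ℝ (fun y => (mpinv (jacobian g y))ᵀ c k) q)
          + (∑ k, (mpinv (jacobian g q))ᵀ c k * p k) • fderiv ℝ (fun y => jacobian g y c l) q))
          = 0 := by
      intro l
      have h2 : HasFDerivAt (fun _ : Fin r → ℝ => p l) (0 : (Fin r → ℝ) →L[ℝ] ℝ) q :=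
        hasFDerivAt_const _ _
      have h3 := hlhs l
      rw [key l] at h3
      exact h3.unique h2
    have happ : ∀ l m : Fin r,
        (∑ c, jacobian g q c l
          * (∑ k, p k * fderiv ℝ (fun y => (mpinv (jacobian g y))ᵀ c k) q (Pi.single m 1)))
        + (∑ c, (∑ k, (mpinv (jacobian g q))ᵀ c k * p k)
          * fderiv ℝ (fun y => jacobian g y c l) q (Pi.single m 1)) = 0 := by
      intro l m
      have h4 := congrArg (fun (L : (Fin r → ℝ) →L[ℝ] ℝ) => L (Pi.single m 1)) (hzero l)
      simpa only [ContinuousLinearMap.sum_apply, ContinuousLinearMap.add_apply,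
        ContinuousLinearMap.smul_apply, ContinuousLinearMap.zero_apply, smul_eq_mul,
        Finset.sum_add_distrib, Finset.mul_sum] using h4
    have e1 : ∀ l m : Fin r,
        (∑ c, jacobian g q c l
          * (∑ k, p k * fderiv ℝ (fun y => (mpinv (jacobian g y))ᵀ c k) q (Pi.single m 1)))
        = -∑ c, (∑ k, (mpinv (jacobian g q))ᵀ c k * p k)
            * fderiv ℝ (fderiv ℝ g) q (Pi.single m 1) (Pi.single l 1) c := by
      intro l m
      have h5 := happ l m
      have h6 : (∑ c, jacobian g q c l
          * (∑ k, p k * fderiv ℝ (fun y => (mpinv (jacobian g y))ᵀ c k) q (Pi.single m 1)))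
          = -(∑ c, (∑ k, (mpinv (jacobian g q))ᵀ c k * p k)
            * fderiv ℝ (fun y => jacobian g y c l) q (Pi.single m 1)) := by linarith
      rw [h6]
      congr 1
      exact Finset.sum_congr rfl fun c _ => by rw [hA' c l m]
    intro l m
    rw [e1 l m, e1 m l]
    congr 1
    exact Finset.sum_congr rfl fun c _ => by
      rw [hsymm (Pi.single m 1) (Pi.single l 1)]
  have hACsym : A0ᵀ * C0 = C0ᵀ * A0 := by
    ext l m
    rw [Matrix.mul_apply, Matrix.mul_apply]
    simp only [Matrix.transpose_apply, hA0, hC0]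
    calc ∑ c, jacobian g q c l
          * (∑ k, p k * fderiv ℝ (fun y => (mpinv (jacobian g y))ᵀ c k) q (Pi.single m 1))
        = ∑ c, jacobian g q c m
          * (∑ k, p k * fderiv ℝ (fun y => (mpinv (jacobian g y))ᵀ c k) q (Pi.single l 1)) :=
          hAC_symm l m
      _ = ∑ c, (∑ k, p k * fderiv ℝ (fun y => (mpinv (jacobian g y))ᵀ c k) q (Pi.single l 1))
          * jacobian g q c m := Finset.sum_congr rfl fun c _ => mul_comm _ _
  -- final block computation
  rw [hDblock, symplJ, symplJ, Matrix.fromBlocks_transpose, Matrix.fromBlocks_multiply,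
    Matrix.fromBlocks_multiply]
  simp only [Matrix.transpose_zero, Matrix.mul_zero, Matrix.zero_mul, Matrix.mul_one,
    Matrix.mul_neg, Matrix.neg_mul, add_zero, zero_add, neg_zero]
  rw [hAF0, hFA0, hACsym]
  simp
end

section
/- Let g : ℝ^r → ℝ^n be a C² immersion and write, in index notation with G = Dg|_{q̃}, the map p(q̃, p̃) = (G⁺)ᵀ p̃ where G⁺ = (GᵀG)⁻¹Gᵀ. Then the matrix Gᵀ · D_{q̃} p(q̃, p̃) ∈ ℝ^{r×r} is symmetric, i.e., its skew-symmetric part vanishes; specifically (Gᵀ D_{q̃} p)_{ij} = -Σ_k ∂²g_k/∂q̃_i∂q̃_j · p_k(q̃, p̃). -/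
open Matrix

/-- Determinant of a matrix of differentiable functions is differentiable. -/
lemma diffAt_matrix_det {r m : ℕ} {B : (Fin r → ℝ) → Matrix (Fin m) (Fin m) ℝ} {x : Fin r → ℝ}
    (h : ∀ i j, DifferentiableAt ℝ (fun q => B q i j) x) :
    DifferentiableAt ℝ (fun q => (B q).det) x := by
  have e : (fun q => (B q).det)
      = fun q => ∑ σ : Equiv.Perm (Fin m),
          ((Equiv.Perm.sign σ : ℤ) : ℝ) * ∏ i, B q (σ i) i := by
    funext q; rw [Matrix.det_apply]
    congr 1; funext σ; rw [Units.smul_def, zsmul_eq_mul]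
  rw [e]
  apply DifferentiableAt.fun_sum
  intro σ _
  exact ((HasFDerivAt.finset_prod (u := Finset.univ) (g := fun i q => B q (σ i) i)
    (fun i _ => (h (σ i) i).hasFDerivAt)).differentiableAt).const_mul _

/-- Entries of the inverse of a matrix of differentiable functions are differentiable
at points of invertibility. -/
lemma diffAt_matrix_inv_entry {r m : ℕ} {B : (Fin r → ℝ) → Matrix (Fin m) (Fin m) ℝ}
    {x : Fin r → ℝ}
    (h : ∀ i j, DifferentiableAt ℝ (fun q => B q i j) x)
    (hdet : (B x).det ≠ 0) (i j : Fin m) :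
    DifferentiableAt ℝ (fun q => (B q)⁻¹ i j) x := by
  have hadj : DifferentiableAt ℝ (fun q => (B q).adjugate i j) x := by
    simp only [Matrix.adjugate_apply]
    apply diffAt_matrix_det
    intro a b
    simp only [Matrix.updateRow_apply]
    by_cases hab : a = j <;> simp [hab, h]
  have e : (fun q => (B q)⁻¹ i j) = fun q => ((B q).det)⁻¹ * (B q).adjugate i j := by
    funext q
    rw [Matrix.inv_def, Matrix.smul_apply, Ring.inverse_eq_inv', smul_eq_mul]
  rw [e]
  exact ((diffAt_matrix_det h).inv hdet).mul hadj

lemma jac_entry_contDiff {n r : ℕ} {g : (Fin r → ℝ) → (Fin n → ℝ)}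
    (hg : ContDiff ℝ 2 g) (k : Fin n) (i : Fin r) :
    ContDiff ℝ 1 (fun q => jacobian g q k i) := by
  have hfd : ContDiff ℝ 1 (fderiv ℝ g) := hg.fderiv_right (by norm_num)
  have e : (fun q => jacobian g q k i)
      = (fun L : (Fin r → ℝ) →L[ℝ] (Fin n → ℝ) => L (Pi.single i 1) k) ∘ fderiv ℝ g := rfl
  rw [e]
  exact (((ContinuousLinearMap.proj (R := ℝ) (φ := fun _ : Fin n => ℝ) k).comp
    (ContinuousLinearMap.apply ℝ (Fin n → ℝ) (Pi.single i 1))).contDiff).comp hfd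

lemma gram_det_unit {n r : ℕ} {g : (Fin r → ℝ) → (Fin n → ℝ)}
    (himm : ∀ q : Fin r → ℝ, (jacobian g q).rank = r) (x : Fin r → ℝ) :
    IsUnit ((jacobian g x)ᵀ * jacobian g x).det := by
  set G := jacobian g
  have hinj : ∀ v : Fin r → ℝ, G x *ᵥ v = 0 → v = 0 := by
    intro v hv
    have hker : LinearMap.ker (G x).mulVecLin = ⊥ := by
      have h1 := (G x).mulVecLin.finrank_range_add_finrank_ker
      have h2 := himm x
      rw [Matrix.rank] at h2
      rw [h2, Module.finrank_fin_fun] at h1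
      have h3 : Module.finrank ℝ (LinearMap.ker (G x).mulVecLin) = 0 := by omega
      exact Submodule.finrank_eq_zero.mp h3
    have : v ∈ LinearMap.ker (G x).mulVecLin := hv
    rw [hker] at this
    simpa using this
  rw [isUnit_iff_ne_zero]
  intro h0
  obtain ⟨v, hv0, hv⟩ := Matrix.exists_mulVec_eq_zero_iff.mpr h0
  apply hv0
  apply hinj
  have key : (G x *ᵥ v) ⬝ᵥ (G x *ᵥ v) = 0 := by
    have : v ⬝ᵥ (((G x)ᵀ * G x) *ᵥ v) = 0 := by rw [hv]; simp
    rwa [← Matrix.mulVec_mulVec, Matrix.dotProduct_mulVec, Matrix.vecMul_transpose] at this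
  exact dotProduct_self_eq_zero.mp key

lemma swap_lemma {n r : ℕ} {g : (Fin r → ℝ) → (Fin n → ℝ)}
    (hg : ContDiff ℝ 2 g) (qr : Fin r → ℝ) (v w : Fin r → ℝ) (k : Fin n) :
    fderiv ℝ (fun q => fderiv ℝ g q v k) qr w = fderiv ℝ (fderiv ℝ g) qr w v k := by
  have hfd : ContDiff ℝ 1 (fderiv ℝ g) := hg.fderiv_right (by norm_num)
  have hdiff : DifferentiableAt ℝ (fderiv ℝ g) qr := (hfd.differentiable one_ne_zero) qr
  set L : ((Fin r → ℝ) →L[ℝ] (Fin n → ℝ)) →L[ℝ] ℝ :=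
    (ContinuousLinearMap.proj (R := ℝ) (φ := fun _ : Fin n => ℝ) k).comp
      (ContinuousLinearMap.apply ℝ (Fin n → ℝ) v) with hL
  have e : (fun q => fderiv ℝ g q v k) = L ∘ fderiv ℝ g := rfl
  rw [e]
  have := (L.hasFDerivAt.comp qr hdiff.hasFDerivAt).fderiv
  rw [this]
  rfl

theorem MCL_aux (n r : ℕ)
    (g : (Fin r → ℝ) → (Fin n → ℝ)) (hg : ContDiff ℝ 2 g)
    (himm : ∀ q : Fin r → ℝ, (jacobian g q).rank = r)
    (qr : Fin r → ℝ) (pr : Fin r → ℝ) :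
    ((jacobian g qr)ᵀ * jacobian (fun q => (mpinv (jacobian g q))ᵀ *ᵥ pr) qr)ᵀ
        = (jacobian g qr)ᵀ * jacobian (fun q => (mpinv (jacobian g q))ᵀ *ᵥ pr) qr ∧
      ∀ i j : Fin r,
        ((jacobian g qr)ᵀ * jacobian (fun q => (mpinv (jacobian g q))ᵀ *ᵥ pr) qr) i j =
          -∑ k : Fin n,
            (fderiv ℝ (fun q => fderiv ℝ g q (Pi.single i 1) k) qr (Pi.single j 1)) *
              ((mpinv (jacobian g qr))ᵀ *ᵥ pr) k := by
  classical
  set G := jacobian g with hGdef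
  set p : (Fin r → ℝ) → (Fin n → ℝ) := fun q => (mpinv (G q))ᵀ *ᵥ pr with hpdef
  have hGd : ∀ (x : Fin r → ℝ) (k : Fin n) (i : Fin r),
      DifferentiableAt ℝ (fun q => G q k i) x :=
    fun x k i => ((jac_entry_contDiff hg k i).differentiable one_ne_zero) x
  have hdet : ∀ x, IsUnit ((G x)ᵀ * G x).det := gram_det_unit himm
  have hdet' : ∀ x, ((G x)ᵀ * G x).det ≠ 0 := fun x => (hdet x).ne_zero
  have hBd : ∀ (x : Fin r → ℝ) i j, DifferentiableAt ℝ (fun q => ((G q)ᵀ * G q) i j) x := by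
    intro x i j
    have e : (fun q => ((G q)ᵀ * G q) i j) = fun q => ∑ k, G q k i * G q k j := by
      funext q; simp [Matrix.mul_apply, Matrix.transpose_apply]
    rw [e]; exact DifferentiableAt.fun_sum fun k _ => (hGd x k i).mul (hGd x k j)
  have hWd : ∀ (x : Fin r → ℝ) i j, DifferentiableAt ℝ (fun q => ((G q)ᵀ * G q)⁻¹ i j) x :=
    fun x i j => diffAt_matrix_inv_entry (hBd x) (hdet' x) i j
  have hpd : ∀ (x : Fin r → ℝ) (k : Fin n), DifferentiableAt ℝ (fun q => p q k) x := by
    intro x k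
    have e : (fun q => p q k)
        = fun q => ∑ i, (∑ j, ((G q)ᵀ * G q)⁻¹ i j * G q k j) * pr i := by
      funext q
      simp [hpdef, mpinv, Matrix.mulVec, dotProduct, Matrix.mul_apply,
        Matrix.transpose_apply, mul_comm]
    rw [e]
    exact DifferentiableAt.fun_sum fun i _ =>
      (DifferentiableAt.fun_sum fun j _ => (hWd x i j).mul (hGd x k j)).mul_const _
  have hkey : ∀ (q : Fin r → ℝ) (i : Fin r), ∑ k, G q k i * p q k = pr i := by
    intro q i
    have h1 : (G q)ᵀ *ᵥ p q = pr := by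
      show (G q)ᵀ *ᵥ ((mpinv (G q))ᵀ *ᵥ pr) = pr
      rw [Matrix.mulVec_mulVec, ← Matrix.transpose_mul, mpinv, Matrix.mul_assoc,
        Matrix.nonsing_inv_mul _ (hdet q), Matrix.transpose_one, Matrix.one_mulVec]
    have h2 := congrFun h1 i
    simpa [Matrix.mulVec, dotProduct, Matrix.transpose_apply] using h2
  have hzero : ∀ i j : Fin r,
      ∑ k, (fderiv ℝ (fun q => G q k i) qr (Pi.single j 1) * p qr k)
        + ∑ k, (G qr k i * fderiv ℝ (fun q => p q k) qr (Pi.single j 1)) = 0 := by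
    intro i j
    have hconst : (fun q => ∑ k, G q k i * p q k) = fun _ => pr i :=
      funext fun q => hkey q i
    have h0 : fderiv ℝ (fun q => ∑ k, G q k i * p q k) qr = 0 := by
      rw [hconst]; exact fderiv_const_apply _
    have h1 : fderiv ℝ (fun q => ∑ k, G q k i * p q k) qr
        = ∑ k, fderiv ℝ (fun q => G q k i * p q k) qr :=
      fderiv_fun_sum fun k _ => (hGd qr k i).mul (hpd qr k)
    have h2 : (∑ k, fderiv ℝ (fun q => G q k i * p q k) qr) (Pi.single j 1) = (0:ℝ) := by
      rw [← h1, h0]; rfl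
    rw [ContinuousLinearMap.sum_apply] at h2
    calc ∑ k, (fderiv ℝ (fun q => G q k i) qr (Pi.single j 1) * p qr k)
          + ∑ k, (G qr k i * fderiv ℝ (fun q => p q k) qr (Pi.single j 1))
        = ∑ k, (fderiv ℝ (fun q => G q k i * p q k) qr) (Pi.single j 1) := by
          rw [← Finset.sum_add_distrib]
          apply Finset.sum_congr rfl; intro k _
          rw [fderiv_fun_mul (hGd qr k i) (hpd qr k)]
          simp only [ContinuousLinearMap.add_apply, ContinuousLinearMap.smul_apply,
            smul_eq_mul]
          ring
      _ = 0 := h2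
  have hpic : ∀ (j : Fin r) (k : Fin n),
      jacobian p qr k j = fderiv ℝ (fun q => p q k) qr (Pi.single j 1) := by
    intro j k
    show fderiv ℝ p qr (Pi.single j 1) k = _
    have e : fderiv ℝ p qr
        = ContinuousLinearMap.pi (fun k => fderiv ℝ (fun q => p q k) qr) :=
      fderiv_pi (hpd qr)
    rw [e]; rfl
  have hMform : ∀ i j : Fin r, ((G qr)ᵀ * jacobian p qr) i j
      = -∑ k, fderiv ℝ (fun q => G q k i) qr (Pi.single j 1) * p qr k := by
    intro i j
    have h3 : ((G qr)ᵀ * jacobian p qr) i j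
        = ∑ k, G qr k i * fderiv ℝ (fun q => p q k) qr (Pi.single j 1) := by
      rw [Matrix.mul_apply]
      exact Finset.sum_congr rfl fun k _ => by rw [Matrix.transpose_apply, hpic]
    rw [h3]
    have h4 := hzero i j
    linarith [h4]
  have hGfd : ∀ (i j : Fin r) (k : Fin n),
      fderiv ℝ (fun q => G q k i) qr (Pi.single j 1)
        = fderiv ℝ (fderiv ℝ g) qr (Pi.single j 1) (Pi.single i 1) k :=
    fun i j k => swap_lemma hg qr (Pi.single i 1) (Pi.single j 1) k
  have hsym : ∀ v w : Fin r → ℝ,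
      fderiv ℝ (fderiv ℝ g) qr v w = fderiv ℝ (fderiv ℝ g) qr w v :=
    fun v w => (hg.contDiffAt.isSymmSndFDerivAt (by norm_num)) v w
  constructor
  · funext i j
    show ((G qr)ᵀ * jacobian p qr) j i = ((G qr)ᵀ * jacobian p qr) i j
    rw [hMform, hMform]
    congr 1
    apply Finset.sum_congr rfl; intro k _
    rw [hGfd, hGfd, congrFun (hsym (Pi.single i 1) (Pi.single j 1)) k]
  · intro i j
    rw [hMform i j]
    rfl

theorem MCL_momentum_term_symmetric (n r : ℕ)
    (g : (Fin r → ℝ) → (Fin n → ℝ)) (hg : ContDiff ℝ 2 g)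
    (himm : ∀ q : Fin r → ℝ, (jacobian g q).rank = r)
    (qr : Fin r → ℝ) (pr : Fin r → ℝ) :
    -- p(q̃, p̃) = (G⁺)ᵀ p̃ with G = Dg|_{q̃};  M = Gᵀ · D_{q̃} p
    (let p : (Fin r → ℝ) → (Fin n → ℝ) := fun q => (mpinv (jacobian g q))ᵀ *ᵥ pr
     let M : Matrix (Fin r) (Fin r) ℝ := (jacobian g qr)ᵀ * jacobian p qr
     Mᵀ = M ∧
       ∀ i j : Fin r, M i j =
         -∑ k : Fin n,
           (fderiv ℝ (fun q => fderiv ℝ g q (Pi.single i 1) k) qr (Pi.single j 1)) *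
             p qr k) := by
  exact MCL_aux n r g hg himm qr pr
end

section
/- Let f : ℝ^{2r} → ℝ^{2n} be a C¹ map whose Jacobian Df|_z is a symplectic matrix for every z (i.e., (Df|_z)ᵀ J₂ₙ Df|_z = J₂ᵣ). Define the reduced vector field F(z) := (Df|_z)⁺ J₂ₙ ∇H(f(z)), where (Df|_z)⁺ = J₂ᵣᵀ (Df|_z)ᵀ J₂ₙ and H : ℝ^{2n} → ℝ is C¹. Then F(z) = J₂ᵣ ∇(H ∘ f)(z); that is, the symplectic-manifold-Galerkin reduction of a canonical Hamiltonian vector field is a canonical Hamiltonian vector field with Hamiltonian H ∘ f. -/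
open Matrix

/-- Gradient of a scalar function on a finite pi space over ℝ. -/
noncomputable def grad {ι : Type*} [Fintype ι] [DecidableEq ι]
    (H : (ι → ℝ) → ℝ) (y : ι → ℝ) : ι → ℝ :=
  fun i => fderiv ℝ H y (Pi.single i 1)

lemma symplJ_sq (n : ℕ) : symplJ n * symplJ n = -1 := by
  simp only [symplJ, Matrix.fromBlocks_multiply]
  ext (i|i) (j|j) <;> simp [Matrix.one_apply]

lemma symplJ_transpose (n : ℕ) : (symplJ n)ᵀ = -symplJ n := by
  simp only [symplJ, Matrix.fromBlocks_transpose]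
  ext (i|i) (j|j) <;> simp

lemma grad_comp (n r : ℕ)
    (f : (Fin r ⊕ Fin r → ℝ) → (Fin n ⊕ Fin n → ℝ)) (hf : ContDiff ℝ 1 f)
    (H : (Fin n ⊕ Fin n → ℝ) → ℝ) (hH : ContDiff ℝ 1 H)
    (z : Fin r ⊕ Fin r → ℝ) :
    grad (H ∘ f) z = (jacobian f z)ᵀ *ᵥ grad H (f z) := by
  have hfd : DifferentiableAt ℝ f z := (hf.differentiable one_ne_zero).differentiableAt
  have hHd : DifferentiableAt ℝ H (f z) := (hH.differentiable one_ne_zero).differentiableAt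
  funext j
  have hcomp : fderiv ℝ (H ∘ f) z = (fderiv ℝ H (f z)).comp (fderiv ℝ f z) :=
    fderiv_comp z hHd hfd
  have hv : (fderiv ℝ f z (Pi.single j 1)) =
      ∑ i, (fderiv ℝ f z (Pi.single j 1) i) • (Pi.single i 1 : Fin n ⊕ Fin n → ℝ) := by
    funext k
    simp [Finset.sum_apply, Pi.single_apply]
  calc grad (H ∘ f) z j = fderiv ℝ H (f z) (fderiv ℝ f z (Pi.single j 1)) := by
        rw [grad, hcomp]; rfl
    _ = ∑ i, (fderiv ℝ f z (Pi.single j 1) i) * fderiv ℝ H (f z) (Pi.single i 1) := by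
        rw [hv]; simp [map_sum, _root_.map_smul, smul_eq_mul, Pi.single_apply, Sum.inl.injEq,
          Sum.inr.injEq, mul_ite, mul_one, mul_zero, Finset.sum_ite_eq, Finset.sum_ite_eq']
    _ = ((jacobian f z)ᵀ *ᵥ grad H (f z)) j := by
        simp [Matrix.mulVec, dotProduct, jacobian, grad, Matrix.transpose_apply,
          Pi.single_apply]

theorem SMG_projection_is_Hamiltonian (n r : ℕ)
    (f : (Fin r ⊕ Fin r → ℝ) → (Fin n ⊕ Fin n → ℝ)) (hf : ContDiff ℝ 1 f)
    (hsympl : ∀ z, (jacobian f z)ᵀ * symplJ n * jacobian f z = symplJ r)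
    (H : (Fin n ⊕ Fin n → ℝ) → ℝ) (hH : ContDiff ℝ 1 H)
    (z : Fin r ⊕ Fin r → ℝ) :
    ((symplJ r)ᵀ * (jacobian f z)ᵀ * symplJ n) *ᵥ (symplJ n *ᵥ grad H (f z)) =
      symplJ r *ᵥ grad (H ∘ f) z := by
  rw [grad_comp n r f hf H hH z]
  have key : ((symplJ r)ᵀ * (jacobian f z)ᵀ * symplJ n) * symplJ n
      = symplJ r * (jacobian f z)ᵀ := by
    rw [Matrix.mul_assoc, symplJ_sq, symplJ_transpose]
    simp [Matrix.mul_neg, Matrix.neg_mul]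
  rw [Matrix.mulVec_mulVec, key, ← Matrix.mulVec_mulVec]
end
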